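/- (Existence of the Generalized Singular Value Decomposition.) Let Z be a real n×p matrix of rank r ≥ 1, and let N (n×n) and M (p×p) be real symmetric positive definite matrices. Then there exist a real n×r matrix U, a real p×r matrix V, and real numbers σ_1 ≥ σ_2 ≥ … ≥ σ_r > 0 such that Z = U diag(σ_1, …, σ_r) Vᵀ, Uᵀ N U = I_r and Vᵀ M V = I_r. -/

import Mathlib

open Matrix BigOperators

private lemma real_conjT {m n : Type*} (X : Matrix m n ℝ) : Xᴴ = Xᵀ := by
  ext i j; simp [conjTranspose_apply]

/-- An antitone nonnegative tuple with exactly `r` nonzero entries is nonzero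
exactly on indices `< r`. -/
private lemma antitone_support (p r : ℕ) (ν : Fin p → ℝ)
    (hanti : ∀ i j : Fin p, i ≤ j → ν j ≤ ν i) (hnn : ∀ i, 0 ≤ ν i)
    (hcard : Fintype.card {i // ν i ≠ 0} = r) (i : Fin p) :
    ν i ≠ 0 ↔ (i : ℕ) < r := by
  classical
  have hcard' : (Finset.univ.filter (fun j : Fin p => ν j ≠ 0)).card = r := by
    rw [← hcard]; simp [Fintype.card_subtype]
  constructor
  · intro hi
    by_contra h
    push_neg at h
    have hsub : Finset.Iic i ⊆ Finset.univ.filter (fun j : Fin p => ν j ≠ 0) := by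
      intro j hj
      simp only [Finset.mem_Iic] at hj
      simp only [Finset.mem_filter, Finset.mem_univ, true_and]
      intro h0
      have h1 : ν i ≤ 0 := h0 ▸ hanti j i hj
      exact hi (le_antisymm h1 (hnn i))
    have := Finset.card_le_card hsub
    rw [hcard', Fin.card_Iic] at this
    omega
  · intro hi h0
    have hsub : Finset.univ.filter (fun j : Fin p => ν j ≠ 0) ⊆ Finset.Iio i := by
      intro j hj
      simp only [Finset.mem_filter, Finset.mem_univ, true_and] at hj
      simp only [Finset.mem_Iio]
      by_contra h
      push_neg at h
      exact hj (le_antisymm (h0 ▸ hanti i j h) (hnn j))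
    have := Finset.card_le_card hsub
    rw [hcard', Fin.card_Iio] at this
    omega

open scoped MatrixOrder in
/-- A symmetric positive definite real matrix has a symmetric invertible square root. -/
private lemma exists_symm_sqrt {n : ℕ} (N : Matrix (Fin n) (Fin n) ℝ) (hN : N.PosDef) :
    ∃ S : Matrix (Fin n) (Fin n) ℝ, Sᵀ = S ∧ S * S = N ∧ IsUnit S.det := by
  refine ⟨CFC.sqrt N, ?_, CFC.sqrt_mul_sqrt_self N hN.posSemidef.nonneg, ?_⟩
  · rw [← real_conjT]; exact (CFC.sqrt_nonneg N).isSelfAdjoint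
  · have h : (CFC.sqrt N).det * (CFC.sqrt N).det = N.det := by
      rw [← det_mul, CFC.sqrt_mul_sqrt_self N hN.posSemidef.nonneg]
    have h2 := hN.det_pos
    refine isUnit_iff_ne_zero.2 ?_
    intro h0
    rw [h0, mul_zero] at h
    rw [← h] at h2
    exact lt_irrefl _ h2

/-- Existence of the GSVD: For a real `n × p` matrix `Z` of rank `r ≥ 1`
and symmetric positive definite metrics `N` (`n × n`) and `M` (`p × p`), there exist
`U : n × r`, `V : p × r` and `σ₁ ≥ … ≥ σ_r > 0` with `Z = U diag(σ) Vᵀ`,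
`Uᵀ N U = I_r` and `Vᵀ M V = I_r`. -/
theorem gsvd_exists (n p r : ℕ) (hr : 1 ≤ r)
    (Z : Matrix (Fin n) (Fin p) ℝ) (hrank : Z.rank = r)
    (N : Matrix (Fin n) (Fin n) ℝ) (M : Matrix (Fin p) (Fin p) ℝ)
    (hN : N.PosDef) (hM : M.PosDef) :
    ∃ (U : Matrix (Fin n) (Fin r) ℝ) (V : Matrix (Fin p) (Fin r) ℝ) (σ : Fin r → ℝ),
      (∀ α, 0 < σ α) ∧ (∀ α β : Fin r, α ≤ β → σ β ≤ σ α) ∧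
      Z = U * Matrix.diagonal σ * Vᵀ ∧
      Uᵀ * N * U = 1 ∧ Vᵀ * M * V = 1 := by
  classical
  have hrp : r ≤ p := hrank ▸ Z.rank_le_width
  obtain ⟨S, hSsym, hSS, hSdet⟩ := exists_symm_sqrt N hN
  obtain ⟨T, hTsym, hTT, hTdet⟩ := exists_symm_sqrt M hM
  set A : Matrix (Fin n) (Fin p) ℝ := S * Z * T with hAdef
  have hArank : A.rank = r := by
    rw [hAdef, rank_mul_eq_left_of_isUnit_det T (S * Z) hTdet,
        rank_mul_eq_right_of_isUnit_det S Z hSdet, hrank]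
  set B : Matrix (Fin p) (Fin p) ℝ := Aᵀ * A with hBdef
  have hBpsd : B.PosSemidef := by
    have h := posSemidef_conjTranspose_mul_self A
    rwa [real_conjT] at h
  have hB : B.IsHermitian := hBpsd.1
  set μ : Fin p → ℝ := hB.eigenvalues with hμdef
  set W : Matrix (Fin p) (Fin p) ℝ := (hB.eigenvectorUnitary : Matrix (Fin p) (Fin p) ℝ) with hWdef
  have hWmem := hB.eigenvectorUnitary.2
  rw [Unitary.mem_iff] at hWmem
  have hWW : Wᵀ * W = 1 := by
    rw [← real_conjT, ← Matrix.star_eq_conjTranspose]; exact hWmem.1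
  have hWW' : W * Wᵀ = 1 := by
    rw [← real_conjT, ← Matrix.star_eq_conjTranspose]; exact hWmem.2
  have hspec : B = W * diagonal μ * Wᵀ := by
    have h := hB.spectral_theorem
    rw [← real_conjT, ← Matrix.star_eq_conjTranspose]
    simpa using h
  have hWBW : Wᵀ * B * W = diagonal μ := by
    rw [hspec]
    calc Wᵀ * (W * diagonal μ * Wᵀ) * W
        = (Wᵀ * W) * diagonal μ * (Wᵀ * W) := by simp only [Matrix.mul_assoc]
      _ = diagonal μ := by rw [hWW, Matrix.one_mul, Matrix.mul_one]
  have hμnn : ∀ i, 0 ≤ μ i := hBpsd.eigenvalues_nonneg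
  have hcards : Fintype.card {i // μ i ≠ 0} = r := by
    rw [← hB.rank_eq_card_non_zero_eigs, hBdef, rank_transpose_mul_self, hArank]
  -- sort the eigenvalues in decreasing order
  set π : Equiv.Perm (Fin p) := Tuple.sort (fun i => -μ i) with hπdef
  set ν : Fin p → ℝ := fun i => μ (π i) with hνdef
  have hanti : ∀ i j : Fin p, i ≤ j → ν j ≤ ν i := by
    intro i j hij
    have h := Tuple.monotone_sort (fun i => -μ i) hij
    simp only [Function.comp_apply] at h
    simpa [hνdef] using neg_le_neg_iff.mp h
  have hνnn : ∀ i, 0 ≤ ν i := fun i => hμnn _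
  have hνcard : Fintype.card {i // ν i ≠ 0} = r := by
    rw [← hcards]
    exact Fintype.card_congr (Equiv.subtypeEquiv π (fun i => Iff.rfl))
  have hsupp : ∀ i : Fin p, ν i ≠ 0 ↔ (i : ℕ) < r :=
    antitone_support p r ν hanti hνnn hνcard
  -- the selection map
  set e : Fin r → Fin p := fun α => π ⟨α.1, lt_of_lt_of_le α.2 hrp⟩ with hedef
  have he : Function.Injective e := by
    intro a b hab
    have h2 := π.injective hab
    rw [Fin.mk.injEq] at h2
    exact Fin.ext h2
  set τ : Fin r → ℝ := fun α => μ (e α) with hτdef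
  have hτν : ∀ α : Fin r, τ α = ν ⟨α.1, lt_of_lt_of_le α.2 hrp⟩ := fun α => rfl
  have hτpos : ∀ α, 0 < τ α := by
    intro α
    refine lt_of_le_of_ne (hνnn _) (Ne.symm ?_)
    exact (hsupp ⟨α.1, lt_of_lt_of_le α.2 hrp⟩).2 α.2
  set σ : Fin r → ℝ := fun α => Real.sqrt (τ α) with hσdef
  have hσpos : ∀ α, 0 < σ α := fun α => Real.sqrt_pos.2 (hτpos α)
  have hσanti : ∀ α β : Fin r, α ≤ β → σ β ≤ σ α := by
    intro α β h
    exact Real.sqrt_le_sqrt (by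
      rw [hτν α, hτν β]
      exact hanti _ _ (by exact h))
  have hσσ : ∀ α, σ α * σ α = τ α := fun α => Real.mul_self_sqrt (hτpos α).le
  -- thin matrices
  set V' : Matrix (Fin p) (Fin r) ℝ := W.submatrix id e with hV'def
  have hV'T : V'ᵀ = Wᵀ.submatrix e id := transpose_submatrix W id e
  have hVV : V'ᵀ * V' = 1 := by
    have h1 : (Wᵀ * W).submatrix e e = Wᵀ.submatrix e id * W.submatrix id e :=
      submatrix_mul Wᵀ W e id e Function.bijective_id
    rw [hV'T, hV'def, ← h1, hWW]
    ext a b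
    simp [Matrix.submatrix_apply, Matrix.one_apply, he.eq_iff]
  have hVBV : V'ᵀ * B * V' = diagonal τ := by
    have h1 : (Wᵀ * B * W).submatrix e e = (Wᵀ * B).submatrix e id * W.submatrix id e :=
      submatrix_mul (Wᵀ * B) W e id e Function.bijective_id
    have h2 : (Wᵀ * B).submatrix e id = Wᵀ.submatrix e id * B.submatrix id id :=
      submatrix_mul Wᵀ B e id id Function.bijective_id
    rw [hWBW, submatrix_diagonal μ e he] at h1
    rw [h2, Matrix.submatrix_id_id] at h1
    rw [hV'T, hV'def, ← h1]
    rfl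
  -- the key projection identity
  set C : Matrix (Fin n) (Fin p) ℝ := A * W with hCdef
  have hCTC : Cᵀ * C = diagonal μ := by
    rw [hCdef, transpose_mul]
    calc Wᵀ * Aᵀ * (A * W) = Wᵀ * (Aᵀ * A) * W := by simp only [Matrix.mul_assoc]
      _ = diagonal μ := by rw [← hBdef, hWBW]
  have hCzero : ∀ j : Fin p, μ j = 0 → ∀ i, C i j = 0 := by
    intro j hj i
    have h : (Cᵀ * C) j j = diagonal μ j j := by rw [hCTC]
    rw [Matrix.mul_apply, Matrix.diagonal_apply_eq, hj] at h
    simp only [transpose_apply] at h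
    have h2 := (Finset.sum_eq_zero_iff_of_nonneg
      (fun k _ => mul_self_nonneg (C k j))).1 h i (Finset.mem_univ i)
    exact mul_self_eq_zero.mp h2
  have himg : ∀ j : Fin p, μ j ≠ 0 → j ∈ Finset.univ.image e := by
    intro j hj
    have h1 : ν (π.symm j) ≠ 0 := by
      rw [hνdef]; simpa using hj
    have h2 : ((π.symm j : Fin p) : ℕ) < r := (hsupp _).1 h1
    refine Finset.mem_image.2 ⟨⟨(π.symm j).1, h2⟩, Finset.mem_univ _, ?_⟩
    show π ⟨(π.symm j).1, _⟩ = j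
    have h3 : (⟨(π.symm j).1, lt_of_lt_of_le h2 hrp⟩ : Fin p) = π.symm j := Fin.ext rfl
    rw [h3, Equiv.apply_symm_apply]
  have hAV : A * V' = C.submatrix id e := by
    have h := submatrix_mul A W id id e Function.bijective_id
    rw [Matrix.submatrix_id_id] at h
    rw [hV'def, hCdef, ← h]
  have hmain : C.submatrix id e * V'ᵀ = C * Wᵀ := by
    ext i k
    rw [Matrix.mul_apply, Matrix.mul_apply]
    simp only [submatrix_apply, transpose_apply, hV'def, id]
    have hinj : ∀ x ∈ Finset.univ, ∀ y ∈ Finset.univ, e x = e y → x = y :=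
      fun x _ y _ h => he h
    have hsum : (∑ j ∈ Finset.univ.image e, C i j * W k j) = ∑ α, C i (e α) * W k (e α) :=
      Finset.sum_image hinj
    rw [← hsum]
    refine Finset.sum_subset (Finset.subset_univ _) ?_
    intro j _ hj
    have hμj : μ j = 0 := by
      by_contra h
      exact hj (himg j h)
    rw [hCzero j hμj i, zero_mul]
  have hAVV : A * V' * V'ᵀ = A := by
    rw [hAV, hmain, hCdef, Matrix.mul_assoc, hWW', Matrix.mul_one]
  -- assemble everything
  set D : Matrix (Fin r) (Fin r) ℝ := diagonal σ with hDdef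
  set Dinv : Matrix (Fin r) (Fin r) ℝ := diagonal (fun α => (σ α)⁻¹) with hDinvdef
  have hDinvD : Dinv * D = 1 := by
    rw [hDdef, hDinvdef, diagonal_mul_diagonal]
    refine Eq.trans (congrArg Matrix.diagonal ?_) Matrix.diagonal_one
    funext i
    exact inv_mul_cancel₀ (hσpos i).ne'
  set Ut : Matrix (Fin n) (Fin r) ℝ := A * V' * Dinv with hUtdef
  have hUtDV : Ut * D * V'ᵀ = A := by
    rw [hUtdef]
    calc A * V' * Dinv * D * V'ᵀ = A * V' * (Dinv * D) * V'ᵀ := by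
          simp only [Matrix.mul_assoc]
      _ = A := by rw [hDinvD, Matrix.mul_one, hAVV]
  have hUtUt : Utᵀ * Ut = 1 := by
    rw [hUtdef]
    have h1 : (A * V' * Dinv)ᵀ = Dinv * (V'ᵀ * Aᵀ) := by
      rw [transpose_mul, transpose_mul, hDinvdef, diagonal_transpose]
    rw [h1]
    have h2 : Dinv * (V'ᵀ * Aᵀ) * (A * V' * Dinv)
        = Dinv * (V'ᵀ * (Aᵀ * A) * V') * Dinv := by simp only [Matrix.mul_assoc]
    rw [h2, ← hBdef, hVBV, hDinvdef, diagonal_mul_diagonal, diagonal_mul_diagonal]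
    refine Eq.trans (congrArg Matrix.diagonal ?_) Matrix.diagonal_one
    funext i
    show ((σ i)⁻¹ * τ i) * (σ i)⁻¹ = 1
    rw [← hσσ i]
    field_simp
    exact div_self (hσpos i).ne'
  refine ⟨S⁻¹ * Ut, T⁻¹ * V', σ, hσpos, hσanti, ?_, ?_, ?_⟩
  · -- Z = U D Vᵀ
    have hTinvT : (T⁻¹)ᵀ = T⁻¹ := by rw [transpose_nonsing_inv, hTsym]
    have hZ : Z = S⁻¹ * A * T⁻¹ := by
      rw [hAdef]
      calc Z = (S⁻¹ * S) * Z * (T * T⁻¹) := by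
            rw [nonsing_inv_mul S hSdet, mul_nonsing_inv T hTdet,
              Matrix.one_mul, Matrix.mul_one]
        _ = S⁻¹ * (S * Z * T) * T⁻¹ := by simp only [Matrix.mul_assoc]
    rw [hZ, ← hUtDV]
    rw [transpose_mul, hTinvT]
    simp only [Matrix.mul_assoc]
    rfl
  · -- Uᵀ N U = 1
    have hSinvT : (S⁻¹)ᵀ = S⁻¹ := by rw [transpose_nonsing_inv, hSsym]
    rw [transpose_mul, hSinvT]
    have h1 : Utᵀ * S⁻¹ * N * (S⁻¹ * Ut) = Utᵀ * (S⁻¹ * N * S⁻¹) * Ut := by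
      simp only [Matrix.mul_assoc]
    rw [h1]
    have h2 : S⁻¹ * N * S⁻¹ = 1 := by
      rw [← hSS]
      calc S⁻¹ * (S * S) * S⁻¹ = (S⁻¹ * S) * (S * S⁻¹) := by simp only [Matrix.mul_assoc]
        _ = 1 := by rw [nonsing_inv_mul S hSdet, mul_nonsing_inv S hSdet, Matrix.one_mul]
    rw [h2, Matrix.mul_one, hUtUt]
  · -- Vᵀ M V = 1
    have hTinvT : (T⁻¹)ᵀ = T⁻¹ := by rw [transpose_nonsing_inv, hTsym]
    rw [transpose_mul, hTinvT]
    have h1 : V'ᵀ * T⁻¹ * M * (T⁻¹ * V') = V'ᵀ * (T⁻¹ * M * T⁻¹) * V' := by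
      simp only [Matrix.mul_assoc]
    rw [h1]
    have h2 : T⁻¹ * M * T⁻¹ = 1 := by
      rw [← hTT]
      calc T⁻¹ * (T * T) * T⁻¹ = (T⁻¹ * T) * (T * T⁻¹) := by simp only [Matrix.mul_assoc]
        _ = 1 := by rw [nonsing_inv_mul T hTdet, mul_nonsing_inv T hTdet, Matrix.one_mul]
    rw [h2, Matrix.mul_one, hVV]
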